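/- Let Q ∈ ℝ^{n×n} and suppose X ∈ ℝ^{n×n} is symmetric positive definite and satisfies the Lyapunov equation XQ + QᵀX = −I. Then for all t ≥ 0, ‖exp(Qt)‖ ≤ √(2‖X⁻¹‖·‖X‖) · exp(−t/(2‖X‖)), where ‖·‖ is the operator 2-norm. -/

import Mathlib

open Matrix
open scoped Matrix.Norms.L2Operator

section Aux

variable {n : ℕ}

local notation "E" => EuclideanSpace ℝ (Fin n)
local notation "T" => Matrix.toEuclideanCLM (𝕜 := ℝ) (n := Fin n)

private lemma inner_T_apply (A : Matrix (Fin n) (Fin n) ℝ) (y z : E) :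
    (inner ℝ (T A y) z : ℝ) =
      (A *ᵥ (WithLp.ofLp y)) ⬝ᵥ (WithLp.ofLp z) := by
  rw [EuclideanSpace.inner_eq_star_dotProduct, Matrix.ofLp_toEuclideanCLM,
    star_trivial, dotProduct_comm]

private lemma key_sum (Q X : Matrix (Fin n) (Fin n) ℝ)
    (hlyap : X * Q + Qᵀ * X = -(1 : Matrix (Fin n) (Fin n) ℝ)) (y : E) :
    (inner ℝ (T X (T Q y)) y : ℝ) + inner ℝ (T X y) (T Q y) = -‖y‖ ^ 2 := by
  have h1 : (inner ℝ (T X (T Q y)) y : ℝ) =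
      ((X * Q) *ᵥ (WithLp.ofLp y)) ⬝ᵥ (WithLp.ofLp y) := by
    rw [inner_T_apply, Matrix.ofLp_toEuclideanCLM,
      Matrix.mulVec_mulVec]
  have h2 : (inner ℝ (T X y) (T Q y) : ℝ) =
      ((Qᵀ * X) *ᵥ (WithLp.ofLp y)) ⬝ᵥ (WithLp.ofLp y) := by
    rw [inner_T_apply, Matrix.ofLp_toEuclideanCLM,
      Matrix.dotProduct_mulVec, ← Matrix.mulVec_transpose, Matrix.mulVec_mulVec]
  have h3 : (‖y‖ : ℝ) ^ 2 = (WithLp.ofLp y) ⬝ᵥ (WithLp.ofLp y) := by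
    rw [← real_inner_self_eq_norm_sq, EuclideanSpace.inner_eq_star_dotProduct, star_trivial]
  rw [h1, h2, h3, ← add_dotProduct, ← Matrix.add_mulVec, hlyap]
  simp [Matrix.neg_mulVec]

private lemma psd_inner {X : Matrix (Fin n) (Fin n) ℝ} (hpd : X.PosDef) (y : E) :
    0 ≤ (inner ℝ (T X y) y : ℝ) := by
  rw [inner_T_apply, dotProduct_comm]
  simpa [star_trivial] using hpd.posSemidef.dotProduct_mulVec_nonneg (WithLp.ofLp y)

private lemma symm_inner {X : Matrix (Fin n) (Fin n) ℝ} (hsymm : X.IsSymm) (a b : E) :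
    (inner ℝ (T X a) b : ℝ) = inner ℝ (T X b) a := by
  rw [inner_T_apply, inner_T_apply, dotProduct_comm, Matrix.dotProduct_mulVec,
    ← Matrix.mulVec_transpose, hsymm.eq]

private lemma cs_inner {X : Matrix (Fin n) (Fin n) ℝ} (hpd : X.PosDef) (hsymm : X.IsSymm)
    (a b : E) :
    (inner ℝ (T X a) b : ℝ) ^ 2 ≤ (inner ℝ (T X a) a : ℝ) * inner ℝ (T X b) b := by
  have hquad : ∀ lam : ℝ, 0 ≤ (inner ℝ (T X b) b : ℝ) * (lam * lam)
      + (2 * (inner ℝ (T X a) b : ℝ)) * lam + (inner ℝ (T X a) a : ℝ) := by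
    intro lam
    have h0 := psd_inner hpd (a + lam • b)
    have hba : (inner ℝ (T X b) a : ℝ) = inner ℝ (T X a) b := symm_inner hsymm b a
    have hexp : (inner ℝ (T X (a + lam • b)) (a + lam • b) : ℝ)
        = (inner ℝ (T X b) b : ℝ) * (lam * lam)
          + (2 * (inner ℝ (T X a) b : ℝ)) * lam + (inner ℝ (T X a) a : ℝ) := by
      simp only [map_add, _root_.map_smul, inner_add_left, inner_add_right,
        real_inner_smul_left, real_inner_smul_right]
      rw [hba]
      ring
    rw [hexp] at h0
    exact h0
  have hd := discrim_le_zero hquad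
  rw [discrim] at hd
  nlinarith [hd]

end Aux

section Aux2

variable {n : ℕ}

local notation "E" => EuclideanSpace ℝ (Fin n)
local notation "T" => Matrix.toEuclideanCLM (𝕜 := ℝ) (n := Fin n)

private lemma upper (X : Matrix (Fin n) (Fin n) ℝ) (y : E) :
    (inner ℝ (T X y) y : ℝ) ≤ ‖X‖ * ‖y‖ ^ 2 := by
  have h1 : (inner ℝ (T X y) y : ℝ) ≤ ‖T X y‖ * ‖y‖ := real_inner_le_norm _ _
  have h2 : ‖T X y‖ ≤ ‖X‖ * ‖y‖ := by
    have := (T X).le_opNorm y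
    rwa [← Matrix.cstar_norm_def] at this
  nlinarith [norm_nonneg y, norm_nonneg (T X y)]

private lemma lower {X : Matrix (Fin n) (Fin n) ℝ} (hpd : X.PosDef) (hsymm : X.IsSymm) (y : E) :
    ‖y‖ ^ 2 ≤ ‖X⁻¹‖ * (inner ℝ (T X y) y : ℝ) := by
  have hdet : IsUnit X.det := isUnit_iff_ne_zero.mpr hpd.det_pos.ne'
  have hXinv : X * X⁻¹ = 1 := Matrix.mul_nonsing_inv X hdet
  have hb : T X (T X⁻¹ y) = y := by
    rw [← ContinuousLinearMap.mul_apply, ← _root_.map_mul, hXinv, _root_.map_one, ContinuousLinearMap.one_apply]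
  have hcs := cs_inner hpd hsymm (T X⁻¹ y) y
  rw [hb] at hcs
  have h1 : (inner ℝ y (T X⁻¹ y) : ℝ) ≤ ‖X⁻¹‖ * ‖y‖ ^ 2 := by
    have ha : (inner ℝ y (T X⁻¹ y) : ℝ) ≤ ‖y‖ * ‖T X⁻¹ y‖ := real_inner_le_norm _ _
    have hb2 : ‖T X⁻¹ y‖ ≤ ‖X⁻¹‖ * ‖y‖ := by
      have := (T X⁻¹).le_opNorm y
      rwa [← Matrix.cstar_norm_def] at this
    nlinarith [norm_nonneg y]
  have h2 : (inner ℝ y y : ℝ) = ‖y‖ ^ 2 := real_inner_self_eq_norm_sq y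
  have h3 : 0 ≤ (inner ℝ (T X y) y : ℝ) := psd_inner hpd y
  rcases eq_or_ne y 0 with rfl | hy
  · simp
  · have hy2 : 0 < ‖y‖ := norm_pos_iff.mpr hy
    rw [h2] at hcs
    have hs : (0:ℝ) < ‖y‖ ^ 2 := pow_pos hy2 2
    nlinarith [hcs, mul_le_mul_of_nonneg_right h1 h3, hs]

end Aux2

set_option maxHeartbeats 1000000 in
/-- Godunov's bound: if X is symmetric positive definite and solves the
Lyapunov equation XQ + QᵀX = −I, then ‖exp(tQ)‖ ≤ √(2‖X⁻¹‖‖X‖)·e^{−t/(2‖X‖)}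
in the operator 2-norm. -/
theorem stmt_9 (n : ℕ) (Q X : Matrix (Fin n) (Fin n) ℝ)
    (hsymm : X.IsSymm) (hpd : X.PosDef)
    (hlyap : X * Q + Qᵀ * X = -(1 : Matrix (Fin n) (Fin n) ℝ)) :
    ∀ t : ℝ, 0 ≤ t →
      ‖NormedSpace.exp (t • Q)‖ ≤
        Real.sqrt (2 * ‖X⁻¹‖ * ‖X‖) * Real.exp (-t / (2 * ‖X‖)) := by
  intro t ht
  rcases Nat.eq_zero_or_pos n with hn | hn
  · subst hn
    haveI : Subsingleton (Matrix (Fin 0) (Fin 0) ℝ) :=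
      ⟨fun a b => by ext i j; exact i.elim0⟩
    have h0 : (NormedSpace.exp (t • Q)) = 0 := Subsingleton.elim _ _
    rw [h0, norm_zero]
    positivity
  · have hXne : X ≠ 0 := by
      intro h0
      have hd := hpd.det_pos
      rw [h0, (haveI : Nonempty (Fin n) := ⟨⟨0, hn⟩⟩; Matrix.det_zero)] at hd
      exact lt_irrefl 0 hd
    have hXpos : (0:ℝ) < ‖X‖ := norm_pos_iff.mpr hXne
    have hXinvnn : (0:ℝ) ≤ ‖X⁻¹‖ := norm_nonneg _
    set c : ℝ := ‖X‖⁻¹ with hc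
    have hcpos : 0 < c := inv_pos.mpr hXpos
    rw [Matrix.cstar_norm_def]
    refine ContinuousLinearMap.opNorm_le_bound _ (by positivity) fun x => ?_
    set T := Matrix.toEuclideanCLM (𝕜 := ℝ) (n := Fin n) with hT
    set u : ℝ → EuclideanSpace ℝ (Fin n) :=
      fun s => T (NormedSpace.exp (s • Q)) x with hu
    -- the linear map A ↦ T A as a continuous linear map
    let ψ : Matrix (Fin n) (Fin n) ℝ →ₗ[ℝ]
        (EuclideanSpace ℝ (Fin n) →L[ℝ] EuclideanSpace ℝ (Fin n)) :=
      { toFun := fun A => T A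
        map_add' := fun A B => by simp [hT]
        map_smul' := fun r A => by simp [hT] }
    let φ := LinearMap.toContinuousLinearMap ψ
    have hφ : ∀ A, φ A = T A := fun A => rfl
    -- derivative of u
    have hu' : ∀ s, HasDerivAt u (T Q (u s)) s := by
      intro s
      have h1 : HasDerivAt (fun r : ℝ => NormedSpace.exp (r • Q))
          (Q * NormedSpace.exp (s • Q)) s := hasDerivAt_exp_smul_const' Q s
      have h2 : HasDerivAt (fun r : ℝ => φ (NormedSpace.exp (r • Q)))
          (φ (Q * NormedSpace.exp (s • Q))) s :=
        φ.hasFDerivAt.comp_hasDerivAt s h1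
      have h3 := h2.clm_apply (hasDerivAt_const s x)
      simp only [map_zero, add_zero] at h3
      have h4 : φ (Q * NormedSpace.exp (s • Q)) x = T Q (u s) := by
        rw [hφ, _root_.map_mul, ContinuousLinearMap.mul_apply]
      rw [h4] at h3
      exact h3
    set f : ℝ → ℝ := fun s => inner ℝ (T X (u s)) (u s) with hf
    have hf' : ∀ s, HasDerivAt f (-‖u s‖ ^ 2) s := by
      intro s
      have ha : HasDerivAt (fun r => T X (u r)) (T X (T Q (u s))) s :=
        (T X).hasFDerivAt.comp_hasDerivAt s (hu' s)
      have hd := HasDerivAt.inner ℝ ha (hu' s)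
      have hks := key_sum Q X hlyap (u s)
      rw [add_comm] at hd
      rwa [hks] at hd
    set g : ℝ → ℝ := fun s => f s * Real.exp (c * s) with hg
    have hg' : ∀ s, HasDerivAt g
        ((-‖u s‖ ^ 2) * Real.exp (c * s) + f s * (Real.exp (c * s) * c)) s := by
      intro s
      have := (hf' s).mul (((hasDerivAt_id s).const_mul c).exp)
      simp at this
      rw [neg_mul]
      exact this
    have hmono : Antitone g := by
      apply antitone_of_hasDerivAt_nonpos hg'
      rw [Pi.le_def]
      intro s
      simp only [Pi.zero_apply]
      have hupper : f s ≤ ‖X‖ * ‖u s‖ ^ 2 := upper X (u s)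
      have h1 : c * f s ≤ ‖u s‖ ^ 2 := by
        have := mul_le_mul_of_nonneg_left hupper hcpos.le
        rwa [hc, ← mul_assoc, inv_mul_cancel₀ hXpos.ne', one_mul] at this
      have hepos := Real.exp_pos (c * s)
      nlinarith [hepos, h1, mul_le_mul_of_nonneg_right h1 hepos.le]
    have hgt : g t ≤ g 0 := hmono ht
    have hu0 : u 0 = x := by
      simp [hu, hT, NormedSpace.exp_zero]
    have hf0 : f 0 ≤ ‖X‖ * ‖x‖ ^ 2 := by
      show (inner ℝ (T X (u 0)) (u 0) : ℝ) ≤ _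
      rw [hu0]
      exact upper X x
    have hg0 : g 0 = f 0 := by simp [hg]
    have hexp_pos := Real.exp_pos (c * t)
    have hft : f t ≤ ‖X‖ * ‖x‖ ^ 2 * Real.exp (-(c * t)) := by
      rw [Real.exp_neg, ← div_eq_mul_inv]
      rw [le_div_iff₀ hexp_pos]
      calc f t * Real.exp (c * t) = g t := rfl
        _ ≤ g 0 := hgt
        _ = f 0 := hg0
        _ ≤ ‖X‖ * ‖x‖ ^ 2 := hf0
    have hlow : ‖u t‖ ^ 2 ≤ ‖X⁻¹‖ * f t := lower hpd hsymm (u t)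
    set econst : ℝ := Real.exp (-t / (2 * ‖X‖)) with he
    have hee : Real.exp (-(c * t)) = econst ^ 2 := by
      rw [sq, ← Real.exp_add]
      congr 1
      rw [hc]
      field_simp
      ring
    have hnormsq : ‖u t‖ ^ 2 ≤ 2 * ‖X⁻¹‖ * ‖X‖ * econst ^ 2 * ‖x‖ ^ 2 := by
      rw [← hee]
      have h5 : ‖u t‖ ^ 2 ≤ ‖X⁻¹‖ * (‖X‖ * ‖x‖ ^ 2 * Real.exp (-(c * t))) :=
        hlow.trans (mul_le_mul_of_nonneg_left hft hXinvnn)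
      have h6 : (0:ℝ) ≤ ‖X⁻¹‖ * (‖X‖ * ‖x‖ ^ 2 * Real.exp (-(c * t))) := by positivity
      linarith [h5, h6]
    have hS : (0:ℝ) ≤ 2 * ‖X⁻¹‖ * ‖X‖ := by positivity
    have hRnn : (0:ℝ) ≤ Real.sqrt (2 * ‖X⁻¹‖ * ‖X‖) * econst * ‖x‖ := by positivity
    have hsq : Real.sqrt (2 * ‖X⁻¹‖ * ‖X‖) ^ 2 = 2 * ‖X⁻¹‖ * ‖X‖ := Real.sq_sqrt hS
    calc ‖u t‖ = Real.sqrt (‖u t‖ ^ 2) := (Real.sqrt_sq (norm_nonneg _)).symm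
      _ ≤ Real.sqrt ((Real.sqrt (2 * ‖X⁻¹‖ * ‖X‖) * econst * ‖x‖) ^ 2) := by
          apply Real.sqrt_le_sqrt
          have h7 : (Real.sqrt (2 * ‖X⁻¹‖ * ‖X‖) * econst * ‖x‖) ^ 2
              = 2 * ‖X⁻¹‖ * ‖X‖ * econst ^ 2 * ‖x‖ ^ 2 := by
            rw [mul_pow, mul_pow, hsq]
          rw [h7]
          exact hnormsq
      _ = Real.sqrt (2 * ‖X⁻¹‖ * ‖X‖) * econst * ‖x‖ := Real.sqrt_sq hRnn
      _ = Real.sqrt (2 * ‖X⁻¹‖ * ‖X‖) * Real.exp (-t / (2 * ‖X‖)) * ‖x‖ := by rw [he]
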